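/- If n is a positive integer such that p i divides n for some index i, then the n-th iterate R^[n] is not ergodic with respect to μ. -/

import Mathlib

open MeasureTheory

private lemma zmod_countable_aux (m : ℕ) : Countable (ZMod m) := by
  cases m
  · exact inferInstanceAs (Countable ℤ)
  · exact inferInstanceAs (Countable (Fin _))

/-- With `X = ∏ i, ZMod (p i)` (the `p i` pairwise distinct primes),
`μ` its Haar probability measure and `R x = x + g` the translation by the element `g`
with all coordinates `1`: if `n` is a positive integer divisible by some `p i`, then
the iterate `R^[n]` is **not** ergodic with respect to `μ`. -/
theorem translation_power_divisible_not_ergodic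
    (p : ℕ → ℕ) (hp : ∀ i, (p i).Prime) (hinj : Function.Injective p)
    (μ : Measure (∀ i, ZMod (p i))) [IsProbabilityMeasure μ]
    (hμ : ∀ x : ∀ i, ZMod (p i), μ.map (fun y => y + x) = μ)
    (g : ∀ i, ZMod (p i)) (hg : ∀ i, g i = 1)
    (n : ℕ) (hn : 0 < n) (hdvd : ∃ i, p i ∣ n) :
    ¬ Ergodic ((fun x => x + g)^[n]) μ := by
  obtain ⟨i, hi⟩ := hdvd
  intro hErg
  haveI : NeZero (p i) := ⟨(hp i).ne_zero⟩
  set s : Set (∀ j, ZMod (p j)) := {x | x i = 0} with hs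
  have hmeasc : ∀ c : ZMod (p i), MeasurableSet {x : ∀ j, ZMod (p j) | x i = c} := by
    intro c
    have : {x : ∀ j, ZMod (p j) | x i = c} = (fun x : ∀ j, ZMod (p j) => x i) ⁻¹' {c} := by
      ext x; simp
    rw [this]
    exact measurable_pi_apply i (MeasurableSet.singleton c)
  have hmeas : MeasurableSet s := hmeasc 0
  have hiter : ∀ (m : ℕ) (x : ∀ j, ZMod (p j)),
      (fun x : ∀ j, ZMod (p j) => x + g)^[m] x = x + m • g := by
    intro m
    induction m with
    | zero => intro x; simp
    | succ k ih =>
      intro x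
      rw [Function.iterate_succ_apply', ih, succ_nsmul, add_assoc]
  have hng : (n • g) i = 0 := by
    have h2 : (n • g) i = n • g i := rfl
    rw [h2, hg i, nsmul_eq_mul, mul_one]
    exact (ZMod.natCast_eq_zero_iff n (p i)).mpr hi
  have hinv : (fun x => x + g)^[n] ⁻¹' s = s := by
    ext x
    simp only [Set.mem_preimage, hiter n x, hs, Set.mem_setOf_eq, Pi.add_apply, hng, add_zero]
  have htrans : ∀ u : ∀ j, ZMod (p j),
      Measurable (fun y : ∀ j, ZMod (p j) => y + u) := by
    intro u
    haveI := fun j => zmod_countable_aux (p j)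
    exact measurable_pi_lambda _ fun j =>
      (measurable_of_countable (fun a : ZMod (p j) => a + u j)).comp (measurable_pi_apply j)
  have hfib : ∀ c : ZMod (p i), μ {x | x i = c} = μ s := by
    intro c
    have h1 := hμ (Function.update (0 : ∀ j, ZMod (p j)) i c)
    calc μ {x | x i = c}
        = (μ.map (fun y => y + Function.update (0 : ∀ j, ZMod (p j)) i c)) {x | x i = c} := by
          rw [h1]
      _ = μ ((fun y => y + Function.update (0 : ∀ j, ZMod (p j)) i c) ⁻¹' {x | x i = c}) :=
          Measure.map_apply (htrans _) (hmeasc c)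
      _ = μ s := by
          congr 1
          ext x
          simp [hs, Function.update_self, add_eq_right]
  have hsum : (p i : ENNReal) * μ s = 1 := by
    have hdisj : Pairwise (Function.onFun Disjoint
        (fun c : ZMod (p i) => {x : ∀ j, ZMod (p j) | x i = c})) := by
      intro a b hab
      simp only [Function.onFun, Set.disjoint_left, Set.mem_setOf_eq]
      intro x hxa hxb
      exact hab (hxa ▸ hxb ▸ rfl)
    have huniv : (⋃ c : ZMod (p i), {x : ∀ j, ZMod (p j) | x i = c}) = Set.univ := by
      ext x; simp
    have h3 := measure_iUnion (μ := μ) hdisj hmeasc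
    rw [huniv, measure_univ, tsum_fintype] at h3
    simp only [hfib] at h3
    rw [Finset.sum_const, Finset.card_univ, ZMod.card, nsmul_eq_mul] at h3
    exact h3.symm
  have hcard : (2 : ENNReal) ≤ (p i : ENNReal) := by
    exact_mod_cast (hp i).two_le
  rcases hErg.measure_self_or_compl_eq_zero hmeas hinv with h0 | h1
  · rw [h0, mul_zero] at hsum
    exact zero_ne_one hsum
  · have h2 : μ s = 1 := (prob_compl_eq_zero_iff hmeas).mp h1
    rw [h2, mul_one] at hsum
    have h4 : (2 : ENNReal) ≤ 1 := hsum ▸ hcard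
    norm_num at h4
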